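/- Let S ↪ T be an extension of Krull domains and let F denote the field of fractions of S. Then: (1) if PT ≠ T for every height-one prime ideal P of S, then S ↪ T is weakly flat if and only if S = F ∩ T; (2) if S ↪ T is weakly flat, then the extension is height-one preserving and, moreover, for every height-one prime ideal P of S with PT ≠ T there is a height-one prime ideal Q of T with Q ∩ S = P. -/

import Mathlib

noncomputable section

/-- The height of a prime ideal `P` of `R`, as the height of the corresponding point of the
prime spectrum. -/
noncomputable def primeHt {R : Type*} [CommRing R] (P : Ideal R) (hP : P.IsPrime) : ℕ∞ :=
  Order.height (⟨P, hP⟩ : PrimeSpectrum R)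

/-- A Krull domain: the localization at every height-one prime is a DVR, `R` is the
intersection of these localizations inside its fraction field (expressed elementwise), and
every nonzero element lies in only finitely many height-one primes. -/
def IsKrullDomain (R : Type*) [CommRing R] [IsDomain R] : Prop :=
  (∀ (P : Ideal R) (hP : P.IsPrime), primeHt P hP = 1 →
      haveI := hP
      haveI := IsLocalization.isDomain_of_local_atPrime hP
      IsDiscreteValuationRing (Localization.AtPrime P)) ∧
  (∀ x y : R, y ≠ 0 →
      (∀ (P : Ideal R) (hP : P.IsPrime), primeHt P hP = 1 → ∃ s ∉ P, s * x ∈ Ideal.span {y}) →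
      y ∣ x) ∧
  (∀ x : R, x ≠ 0 → {P : Ideal R | ∃ hP : P.IsPrime, primeHt P hP = 1 ∧ x ∈ P}.Finite)

/-- An extension of Krull domains is weakly flat if every height-one prime `P` of the base
with `P·T ≠ T` satisfies `PT ∩ S = P`. -/
def WeaklyFlat {S T : Type*} [CommRing S] [CommRing T] (f : S →+* T) : Prop :=
  ∀ (P : Ideal S) (hP : P.IsPrime), primeHt P hP = 1 → P.map f ≠ ⊤ → (P.map f).comap f = P

/-- An extension of Krull domains is height-one preserving if for every height-one prime `P`
of the base with `PT ≠ T` there exists a height-one prime `Q` of `T` with `PT ⊆ Q`. -/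
def HeightOnePreserving {S T : Type*} [CommRing S] [CommRing T] (f : S →+* T) : Prop :=
  ∀ (P : Ideal S) (hP : P.IsPrime), primeHt P hP = 1 → P.map f ≠ ⊤ →
    ∃ (Q : Ideal T) (hQ : Q.IsPrime), primeHt Q hQ = 1 ∧ P.map f ≤ Q

section Helpers
set_option linter.unusedSectionVars false


variable {R : Type*} [CommRing R] [IsDomain R]

/-- Pull back divisibility in the localization at a prime to a relation in `R`. -/
lemma dvd_of_loc_dvd (P : Ideal R) [hP : P.IsPrime] {a b : R}
    (h : algebraMap R (Localization.AtPrime P) a ∣ algebraMap R (Localization.AtPrime P) b) :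
    ∃ s ∉ P, ∃ c, s * b = c * a := by
  obtain ⟨d, hd⟩ := h
  obtain ⟨c, u, rfl⟩ := IsLocalization.exists_mk'_eq P.primeCompl d
  have hinj : Function.Injective (algebraMap R (Localization.AtPrime P)) :=
    IsLocalization.injective _ P.primeCompl_le_nonZeroDivisors
  refine ⟨u, u.2, c, hinj ?_⟩
  rw [map_mul, map_mul, hd]
  rw [mul_comm (algebraMap R (Localization.AtPrime P) (u : R))]
  rw [mul_assoc, IsLocalization.mk'_spec, mul_comm]

/-- The DVR dichotomy at a height-one prime. -/
lemma dvr_dichotomy (P : Ideal R) [hP : P.IsPrime]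
    [IsDiscreteValuationRing (Localization.AtPrime P)] (x y : R) (hy : y ≠ 0) :
    (∃ s ∉ P, ∃ c, s * x = c * y) ∨ (∃ s ∉ P, ∃ c ∈ P, s * y = c * x) := by
  set A := Localization.AtPrime P with hA
  have hinj : Function.Injective (algebraMap R A) :=
    IsLocalization.injective _ P.primeCompl_le_nonZeroDivisors
  by_cases hx : x = 0
  · exact Or.inl ⟨1, hP.ne_top ∘ (fun h => P.eq_top_of_isUnit_mem h isUnit_one), 0, by
      simp [hx]⟩
  have hx' : algebraMap R A x ≠ 0 := fun h => hx (hinj (by simpa using h))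
  have hy' : algebraMap R A y ≠ 0 := fun h => hy (hinj (by simpa using h))
  obtain ⟨ϖ, hϖ⟩ := IsDiscreteValuationRing.exists_irreducible A
  obtain ⟨m, hm⟩ := IsDiscreteValuationRing.associated_pow_irreducible hx' hϖ
  obtain ⟨n, hn⟩ := IsDiscreteValuationRing.associated_pow_irreducible hy' hϖ
  rcases le_or_gt n m with hnm | hmn
  · left
    exact dvd_of_loc_dvd P ((hn.dvd.trans (pow_dvd_pow ϖ hnm)).trans hm.symm.dvd)
  · -- m < n : y = x * d with d in the maximal ideal
    right
    obtain ⟨um, hum⟩ := hm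
    obtain ⟨un, hun⟩ := hn
    set d : A := (um : A) * ϖ ^ (n - m) * ((un⁻¹ : Aˣ) : A) with hd
    have hxd : algebraMap R A x * d = algebraMap R A y := by
      have h1 : algebraMap R A x * (um : A) = ϖ ^ m := hum
      have h2 : algebraMap R A y * (un : A) = ϖ ^ n := hun
      have : algebraMap R A x * d * (un : A) = algebraMap R A y * (un : A) := by
        rw [h2, hd]
        calc algebraMap R A x * ((um : A) * ϖ ^ (n - m) * ((un⁻¹ : Aˣ) : A)) * (un : A)
            = (algebraMap R A x * (um : A)) * ϖ ^ (n - m) * (((un⁻¹ : Aˣ) : A) * (un : A)) := by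
              ring
          _ = ϖ ^ m * ϖ ^ (n - m) * 1 := by rw [h1, Units.inv_mul]
          _ = ϖ ^ n := by rw [mul_one, ← pow_add]; congr 1; omega
      exact mul_right_cancel₀ (Units.ne_zero un) this
    have hdmem : d ∈ IsLocalRing.maximalIdeal A := by
      rw [hϖ.maximalIdeal_eq, Ideal.mem_span_singleton]
      exact (dvd_pow_self ϖ (by omega : n - m ≠ 0)).mul_left _ |>.mul_right _
    obtain ⟨c, u, hcu⟩ := IsLocalization.exists_mk'_eq P.primeCompl d
    have hc : algebraMap R A c = d * algebraMap R A (u : R) := by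
      rw [← hcu, IsLocalization.mk'_spec]
    have hcP : c ∈ P := by
      have : algebraMap R A c ∈ IsLocalRing.maximalIdeal A := by
        rw [hc]; exact Ideal.mul_mem_right _ _ hdmem
      rwa [IsLocalization.AtPrime.to_map_mem_maximal_iff A P] at this
    refine ⟨u, u.2, c, hcP, hinj ?_⟩
    rw [map_mul, map_mul, hc, ← hxd]
    ring


/-- A height-one prime (one whose localization is a DVR) contains an element `p` dividing,
up to denominators, every element of `P`. -/
lemma exists_uniformizer (P : Ideal R) [hP : P.IsPrime]
    [IsDiscreteValuationRing (Localization.AtPrime P)] :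
    ∃ p ∈ P, p ≠ 0 ∧ ∀ q ∈ P, ∃ s ∉ P, ∃ c, s * q = c * p := by
  set A := Localization.AtPrime P with hA
  obtain ⟨ϖ, hϖ⟩ := IsDiscreteValuationRing.exists_irreducible A
  obtain ⟨p, u, hpu⟩ := IsLocalization.exists_mk'_eq P.primeCompl ϖ
  have hp : algebraMap R A p = ϖ * algebraMap R A (u : R) := by
    rw [← hpu, IsLocalization.mk'_spec]
  have hassoc : Associated ϖ (algebraMap R A p) := by
    refine ⟨IsLocalization.map_units A u |>.unit, ?_⟩
    rw [IsUnit.unit_spec, ← hp]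
  have hirr : Irreducible (algebraMap R A p) := hassoc.irreducible hϖ
  have hmax : algebraMap R A p ∈ IsLocalRing.maximalIdeal A :=
    hirr.not_isUnit
  have hpP : p ∈ P := (IsLocalization.AtPrime.to_map_mem_maximal_iff A P p).mp hmax
  have hp0 : p ≠ 0 := by
    intro h
    exact hirr.ne_zero (by rw [h, map_zero])
  refine ⟨p, hpP, hp0, fun q hq => ?_⟩
  refine dvd_of_loc_dvd P ?_
  have : algebraMap R A q ∈ IsLocalRing.maximalIdeal A :=
    (IsLocalization.AtPrime.to_map_mem_maximal_iff A P q).mpr hq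
  rw [hirr.maximalIdeal_eq, Ideal.mem_span_singleton] at this
  exact this

/-- Clearing denominators in the image ideal `P.map f`. -/
lemma map_mem_clear {T : Type*} [CommRing T] (f : R →+* T) (P : Ideal R) (hP : P.IsPrime)
    {p : R} (hpspec : ∀ q ∈ P, ∃ s ∉ P, ∃ c, s * q = c * p) :
    ∀ z ∈ P.map f, ∃ s ∉ P, f s * z ∈ Ideal.span {f p} := by
  intro z hz
  have hz' : z ∈ Ideal.span (f '' (P : Set R)) := hz
  refine Submodule.span_induction ?_ ?_ ?_ ?_ hz'
  · rintro _ ⟨q, hq, rfl⟩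
    obtain ⟨s, hs, c, hsc⟩ := hpspec q hq
    refine ⟨s, hs, ?_⟩
    rw [← map_mul, hsc, map_mul, Ideal.mem_span_singleton]
    exact Dvd.intro_left _ rfl
  · exact ⟨1, fun h => hP.ne_top (P.eq_top_of_isUnit_mem h isUnit_one), by simp⟩
  · rintro z₁ z₂ _ _ ⟨s₁, hs₁, h₁⟩ ⟨s₂, hs₂, h₂⟩
    refine ⟨s₁ * s₂, fun h => ((hP.mem_or_mem h).elim hs₁ hs₂), ?_⟩
    have : f (s₁ * s₂) * (z₁ + z₂) = f s₂ * (f s₁ * z₁) + f s₁ * (f s₂ * z₂) := by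
      rw [map_mul]; ring
    rw [this]
    exact Ideal.add_mem _ (Ideal.mul_mem_left _ _ h₁) (Ideal.mul_mem_left _ _ h₂)
  · rintro a z _ ⟨s, hs, h⟩
    refine ⟨s, hs, ?_⟩
    have : f s * (a • z) = a * (f s * z) := by rw [smul_eq_mul]; ring
    rw [this]
    exact Ideal.mul_mem_left _ _ h

end Helpers

/-- Let `S ↪ T` be an extension of Krull domains and `F` the field of fractions of `S`.
(1) If `PT ≠ T` for every height-one prime `P` of `S`, then `S ↪ T` is weakly flat if and
only if `S = F ∩ T` (expressed elementwise: every element of `T` of the form `f x / f y`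
with `x, y ∈ S`, `y ≠ 0`, already lies in `S`, i.e. `y ∣ x` in `S`).
(2) If `S ↪ T` is weakly flat, then the extension is height-one preserving and, moreover,
for every height-one prime `P` of `S` with `PT ≠ T` there is a height-one prime `Q` of `T`
with `Q ∩ S = P`. -/
theorem stmt_12 {S T : Type*} [CommRing S] [CommRing T] [IsDomain S] [IsDomain T]
    (hS : IsKrullDomain S) (hT : IsKrullDomain T)
    (f : S →+* T) (hf : Function.Injective f) :
    ((∀ (P : Ideal S) (hP : P.IsPrime), primeHt P hP = 1 → P.map f ≠ ⊤) →
      (WeaklyFlat f ↔ ∀ x y : S, y ≠ 0 → (∃ t : T, t * f y = f x) → y ∣ x)) ∧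
    (WeaklyFlat f →
      (HeightOnePreserving f ∧
        ∀ (P : Ideal S) (hP : P.IsPrime), primeHt P hP = 1 → P.map f ≠ ⊤ →
          ∃ (Q : Ideal T) (hQ : Q.IsPrime), primeHt Q hQ = 1 ∧ Q.comap f = P)) := by
  -- Part 2 key construction, also used to derive HeightOnePreserving
  have key2 : WeaklyFlat f → ∀ (P : Ideal S) (hP : P.IsPrime), primeHt P hP = 1 →
      P.map f ≠ ⊤ →
      ∃ (Q : Ideal T) (hQ : Q.IsPrime), primeHt Q hQ = 1 ∧ P.map f ≤ Q ∧ Q.comap f = P := by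
    intro hwf P hP h1 hne
    haveI := hP
    haveI : IsDiscreteValuationRing (Localization.AtPrime P) := hS.1 P hP h1
    obtain ⟨p, hpP, hp0, hpspec⟩ := exists_uniformizer P
    have hfp0 : f p ≠ 0 := fun h => hp0 (hf (by simpa using h))
    have hfpmem : f p ∈ P.map f := Ideal.mem_map_of_mem f hpP
    -- the finite set of height-one primes of T containing f p
    have hfin := hT.2.2 (f p) hfp0
    -- Claim: some height-one prime Q containing f p satisfies Q.comap f ≤ P
    have claim : ∃ Q : Ideal T, (∃ hQ : Q.IsPrime, primeHt Q hQ = 1 ∧ f p ∈ Q) ∧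
        Q.comap f ≤ P := by
      by_contra hcon
      push_neg at hcon
      set F := hfin.toFinset with hF
      have hmemF : ∀ Q : Ideal T, Q ∈ F ↔ (∃ hQ : Q.IsPrime, primeHt Q hQ = 1 ∧ f p ∈ Q) :=
        fun Q => hfin.mem_toFinset
      -- pick for each Q ∈ F an element s_Q ∈ Q ∩ S outside P
      have hch : ∀ Q ∈ F, ∃ s : S, f s ∈ Q ∧ s ∉ P := by
        intro Q hQ
        have h2 := hcon Q ((hmemF Q).mp hQ)
        obtain ⟨s, hs1, hs2⟩ := SetLike.not_le_iff_exists.mp h2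
        exact ⟨s, hs1, hs2⟩
      choose g hg1 hg2 using hch
      set s : S := ∏ Q ∈ F.attach, g Q Q.2 with hs
      have hsP : s ∉ P := by
        intro hmem
        have := Ideal.IsPrime.prod_mem_iff.mp hmem
        obtain ⟨Q, _, hQP⟩ := this
        exact hg2 Q Q.2 hQP
      have hsQ : ∀ Q ∈ F, f s ∈ Q := by
        intro Q hQ
        have hdvd : g Q hQ ∣ s := Finset.dvd_prod_of_mem _ (F.mem_attach ⟨Q, hQ⟩)
        obtain ⟨c, hc⟩ := hdvd
        rw [hs] at hc
        rw [show s = g Q hQ * c from hc, map_mul]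
        exact Ideal.mul_mem_right _ _ (hg1 Q hQ)
      -- uniform exponent
      have hQk : ∀ Q ∈ F, ∃ k : ℕ, ∀ N : ℕ, k ≤ N →
          ∃ u ∉ Q, u * (f s) ^ N ∈ Ideal.span {f p} := by
        intro Q hQ
        obtain ⟨hQp, hQ1, hfpQ⟩ := (hmemF Q).mp hQ
        haveI := hQp
        haveI : IsDiscreteValuationRing (Localization.AtPrime Q) := hT.1 Q hQp hQ1
        set A := Localization.AtPrime Q with hA
        have hfp' : algebraMap T A (f p) ≠ 0 := fun h => hfp0
          (IsLocalization.injective A Q.primeCompl_le_nonZeroDivisors (by simpa using h))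
        obtain ⟨ϖ, hϖ⟩ := IsDiscreteValuationRing.exists_irreducible A
        obtain ⟨k, hk⟩ := IsDiscreteValuationRing.associated_pow_irreducible hfp' hϖ
        refine ⟨k, fun N hN => ?_⟩
        have hfs : ϖ ∣ algebraMap T A (f s) := by
          have : algebraMap T A (f s) ∈ IsLocalRing.maximalIdeal A :=
            (IsLocalization.AtPrime.to_map_mem_maximal_iff A Q (f s)).mpr (hsQ Q hQ)
          rwa [hϖ.maximalIdeal_eq, Ideal.mem_span_singleton] at this
        have hdvd : algebraMap T A (f p) ∣ algebraMap T A ((f s) ^ N) := by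
          rw [map_pow]
          exact hk.dvd.trans ((pow_dvd_pow ϖ hN).trans (pow_dvd_pow_of_dvd hfs N))
        obtain ⟨u, hu, c, huc⟩ := dvd_of_loc_dvd Q hdvd
        refine ⟨u, hu, ?_⟩
        rw [huc, Ideal.mem_span_singleton]
        exact Dvd.intro_left _ rfl
      choose k hk using hQk
      set N : ℕ := F.attach.sup (fun Q => k Q Q.2) with hN
      have hleN : ∀ (Q : Ideal T) (hQF : Q ∈ F), k Q hQF ≤ N := by
        intro Q hQF
        rw [hN]
        exact Finset.le_sup (f := fun (Q : {x // x ∈ F}) => k Q Q.2) (F.mem_attach ⟨Q, hQF⟩)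
      -- f p divides (f s)^N by the Krull intersection property of T
      have hdiv : f p ∣ (f s) ^ N := by
        refine hT.2.1 ((f s) ^ N) (f p) hfp0 ?_
        intro Q hQp hQ1
        by_cases hfpQ : f p ∈ Q
        · have hQF : Q ∈ F := (hmemF Q).mpr ⟨hQp, hQ1, hfpQ⟩
          exact hk Q hQF N (hleN Q hQF)
        · refine ⟨f p, hfpQ, ?_⟩
          rw [Ideal.mem_span_singleton]
          exact Dvd.intro _ rfl
      obtain ⟨c, hc⟩ := hdiv
      have : f (s ^ N) ∈ P.map f := by
        rw [map_pow, hc]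
        exact Ideal.mul_mem_right _ _ hfpmem
      have : s ^ N ∈ (P.map f).comap f := this
      rw [hwf P hP h1 hne] at this
      exact hsP (hP.mem_of_pow_mem _ this)
    obtain ⟨Q, ⟨hQp, hQ1, hfpQ⟩, hQle⟩ := claim
    refine ⟨Q, hQp, hQ1, ?_, ?_⟩
    · -- P.map f ≤ Q
      rw [Ideal.map]
      rw [Ideal.span_le]
      rintro _ ⟨q, hq, rfl⟩
      obtain ⟨s', hs', c, hsc⟩ := hpspec q hq
      have : f s' * f q ∈ Q := by
        rw [← map_mul, hsc, map_mul]
        exact Ideal.mul_mem_left _ _ hfpQ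
      rcases hQp.mem_or_mem this with h | h
      · exact absurd (hQle h) hs'
      · exact h
    · refine le_antisymm hQle fun a ha => ?_
      -- a ∈ P implies f a ∈ P.map f ≤ Q; but we just use f a ∈ Q directly
      have : f a * f 1 ∈ Q := by
        obtain ⟨s', hs', c, hsc⟩ := hpspec a ha
        have h2 : f s' * f a ∈ Q := by
          rw [← map_mul, hsc, map_mul]
          exact Ideal.mul_mem_left _ _ hfpQ
        rcases hQp.mem_or_mem h2 with h | h
        · exact absurd (hQle h) hs'
        · rw [map_one, mul_one]; exact h
      rw [map_one, mul_one] at this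
      exact this
  constructor
  · -- Part 1
    intro hA
    constructor
    · -- weakly flat → divisibility
      intro hwf x y hy ⟨t, ht⟩
      refine hS.2.1 x y hy ?_
      intro P hP h1
      haveI := hP
      haveI : IsDiscreteValuationRing (Localization.AtPrime P) := hS.1 P hP h1
      rcases dvr_dichotomy P x y hy with ⟨s, hs, c, hsc⟩ | ⟨s, hs, c, hcP, hsc⟩
      · refine ⟨s, hs, ?_⟩
        rw [hsc, Ideal.mem_span_singleton]
        exact Dvd.intro_left _ rfl
      · -- s * y = c * x with c ∈ P : contradiction with weak flatness
        exfalso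
        have h2 : f s * f y = f c * (t * f y) := by
          rw [← map_mul, hsc, map_mul, ht]
        have hfy : f y ≠ 0 := fun h => hy (hf (by simpa using h))
        have h3 : f s = f c * t := by
          apply mul_right_cancel₀ hfy
          rw [h2]; ring
        have h4 : f s ∈ P.map f := by
          rw [h3]
          exact Ideal.mul_mem_right _ _ (Ideal.mem_map_of_mem f hcP)
        have h5 : s ∈ (P.map f).comap f := h4
        rw [hwf P hP h1 (hA P hP h1)] at h5
        exact hs h5
    · -- divisibility → weakly flat
      intro hdvd P hP h1 _
      refine le_antisymm (fun a ha => ?_) Ideal.le_comap_map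
      haveI := hP
      haveI : IsDiscreteValuationRing (Localization.AtPrime P) := hS.1 P hP h1
      obtain ⟨p, hpP, hp0, hpspec⟩ := exists_uniformizer P
      by_contra haP
      have hfa : f a ∈ P.map f := ha
      obtain ⟨s, hs, hmem⟩ := map_mem_clear f P hP hpspec (f a) hfa
      rw [Ideal.mem_span_singleton'] at hmem
      obtain ⟨t, htt⟩ := hmem
      have : p ∣ s * a := by
        refine hdvd (s * a) p hp0 ⟨t, ?_⟩
        rw [htt, map_mul]
      obtain ⟨c, hc⟩ := this
      have : s * a ∈ P := hc ▸ Ideal.mul_mem_right _ _ hpP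
      rcases hP.mem_or_mem this with h | h
      · exact hs h
      · exact haP h
  · -- Part 2
    intro hwf
    constructor
    · intro P hP h1 hne
      obtain ⟨Q, hQp, hQ1, hle, _⟩ := key2 hwf P hP h1 hne
      exact ⟨Q, hQp, hQ1, hle⟩
    · intro P hP h1 hne
      obtain ⟨Q, hQp, hQ1, _, hcom⟩ := key2 hwf P hP h1 hne
      exact ⟨Q, hQp, hQ1, hcom⟩

end
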